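/- Let μ be a Borel probability measure on ℝ with support contained in [a, b] where 0 < a ≤ b. Let g : (−1, 0) → (−∞, 0) be differentiable with ψ_μ(g(u)) = u for all u ∈ (−1, 0), and define S(u) = (1 + u)·g(u)/u. Then for every u ∈ (−1, 0): S(u) > 0 and (1 + u)/S(u) − u·x > 0 for every x ∈ [a, b], so that H(u) := −(1 + u)·log S(u) − ∫ log((1 + u)/S(u) − u·x) dμ(x) is a well-defined real number; moreover H is differentiable on (−1, 0) with H'(u) = −log S(u), and if in addition g is twice differentiable then H is twice differentiable with H''(u) = −S'(u)/S(u). -/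

import Mathlib

open MeasureTheory Metric

lemma aux_integrable12 (μ : Measure ℝ) [IsProbabilityMeasure μ] {a b : ℝ}
    (ha : 0 < a) (hsupp : ∀ᵐ x ∂μ, x ∈ Set.Icc a b)
    {z : ℝ} (hz : z < 0) :
    Integrable (fun x => Real.log (1 - z * x)) μ := by
  apply Integrable.mono' (integrable_const (Real.log (1 - z * b)))
  · exact (Real.measurable_log.comp
      (measurable_const.sub (measurable_const.mul measurable_id))).aestronglyMeasurable
  · filter_upwards [hsupp] with x hx
    have hx1 : 0 < x := lt_of_lt_of_le ha hx.1
    have h1 : 1 ≤ 1 - z * x := by nlinarith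
    have h2 : 1 - z * x ≤ 1 - z * b := by
      nlinarith [mul_nonneg (neg_nonneg.mpr hz.le) (sub_nonneg.mpr hx.2)]
    rw [Real.norm_eq_abs, abs_of_nonneg (Real.log_nonneg h1)]
    exact Real.log_le_log (by linarith : (0:ℝ) < 1 - z * x) h2

lemma aux_deriv12 (μ : Measure ℝ) [IsProbabilityMeasure μ] {a b : ℝ}
    (ha : 0 < a) (hab : a ≤ b) (hsupp : ∀ᵐ x ∂μ, x ∈ Set.Icc a b)
    {z₀ : ℝ} (hz : z₀ < 0) :
    HasDerivAt (fun z => ∫ x, Real.log (1 - z * x) ∂μ)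
      (∫ x, -x / (1 - z₀ * x) ∂μ) z₀ := by
  have hb : 0 < b := lt_of_lt_of_le ha hab
  have key := hasDerivAt_integral_of_dominated_loc_of_deriv_le
      (F := fun z x => Real.log (1 - z * x)) (F' := fun z x => -x / (1 - z * x))
      (x₀ := z₀) (bound := fun _ => b) (s := ball z₀ (-z₀)) (μ := μ)
      (ball_mem_nhds z₀ (by linarith))
      (Filter.Eventually.of_forall fun z =>
        (Real.measurable_log.comp
          (measurable_const.sub (measurable_const.mul measurable_id))).aestronglyMeasurable)
      (aux_integrable12 μ ha hsupp hz)
      ((measurable_id.neg.div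
        (measurable_const.sub (measurable_const.mul measurable_id))).aestronglyMeasurable)
      ?_ (integrable_const b) ?_
  · exact key.2
  · filter_upwards [hsupp] with x hx z hzball
    have hzneg : z < 0 := by
      have := abs_lt.mp (mem_ball_iff_norm.mp hzball); linarith [this.2]
    have hx1 : 0 < x := lt_of_lt_of_le ha hx.1
    have h1 : 1 ≤ 1 - z * x := by nlinarith
    rw [Real.norm_eq_abs, abs_div, abs_neg, abs_of_pos hx1,
      abs_of_pos (by linarith : (0:ℝ) < 1 - z * x)]
    calc x / (1 - z * x) ≤ x / 1 := by
          apply div_le_div_of_nonneg_left (le_of_lt hx1) one_pos h1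
      _ ≤ b := by simpa using hx.2
  · filter_upwards [hsupp] with x hx z hzball
    have hzneg : z < 0 := by
      have := abs_lt.mp (mem_ball_iff_norm.mp hzball); linarith [this.2]
    have hx1 : 0 < x := lt_of_lt_of_le ha hx.1
    have h1 : (1:ℝ) ≤ 1 - z * x := by nlinarith
    have hne : 1 - z * x ≠ 0 := by linarith
    have hinner : HasDerivAt (fun z : ℝ => 1 - z * x) (-(1 * x)) z :=
      ((hasDerivAt_id z).mul_const x).const_sub 1
    have := hinner.log hne
    simpa using this

theorem stmt12 (a b : ℝ) (ha : 0 < a) (hab : a ≤ b)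
    (μ : Measure ℝ) [IsProbabilityMeasure μ] (hsupp : ∀ᵐ x ∂μ, x ∈ Set.Icc a b)
    (g g' : ℝ → ℝ)
    (hgneg : ∀ u ∈ Set.Ioo (-1 : ℝ) 0, g u < 0)
    (hd : ∀ u ∈ Set.Ioo (-1 : ℝ) 0, HasDerivAt g (g' u) u)
    (hinv : ∀ u ∈ Set.Ioo (-1 : ℝ) 0, (∫ x, (g u * x) / (1 - g u * x) ∂μ) = u)
    (S H : ℝ → ℝ)
    (hS : ∀ u : ℝ, S u = (1 + u) * g u / u)
    (hH : ∀ u : ℝ, H u = -(1 + u) * Real.log (S u)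
        - ∫ x, Real.log ((1 + u) / S u - u * x) ∂μ) :
    (∀ u ∈ Set.Ioo (-1 : ℝ) 0,
        0 < S u ∧
        (∀ x ∈ Set.Icc a b, 0 < (1 + u) / S u - u * x) ∧
        Integrable (fun x => Real.log ((1 + u) / S u - u * x)) μ ∧
        HasDerivAt H (-Real.log (S u)) u) ∧
    ((∀ u ∈ Set.Ioo (-1 : ℝ) 0, DifferentiableAt ℝ g' u) →
        ∀ u ∈ Set.Ioo (-1 : ℝ) 0, HasDerivAt (deriv H) (-(deriv S u) / S u) u) := by
  set F : ℝ → ℝ := fun z => ∫ x, Real.log (1 - z * x) ∂μ with hFdef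
  -- basic pointwise facts and the representation of H
  have hfacts : ∀ u ∈ Set.Ioo (-1:ℝ) 0,
      0 < S u ∧ (∀ x ∈ Set.Icc a b, 0 < (1+u)/S u - u*x) ∧
      Integrable (fun x => Real.log ((1+u)/S u - u*x)) μ ∧
      H u = -u * Real.log (S u) - Real.log (1+u) - F (g u) := by
    intro u hu
    obtain ⟨hu1, hu0⟩ := hu
    have hp : g u < 0 := hgneg u ⟨hu1, hu0⟩
    have hu0' : u ≠ 0 := ne_of_lt hu0
    have h1u : 0 < 1 + u := by linarith
    have hSpos : 0 < S u := by
      rw [hS u]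
      exact div_pos_of_neg_of_neg (mul_neg_of_pos_of_neg h1u hp) hu0
    have hkey : (1+u)/S u = u / g u := by
      rw [hS u]
      field_simp
    have hug : 0 < u / g u := div_pos_of_neg_of_neg hu0 hp
    have hpos : ∀ x ∈ Set.Icc a b, 0 < (1+u)/S u - u*x := by
      intro x hx
      rw [hkey]
      have hx1 : 0 < x := lt_of_lt_of_le ha hx.1
      have : 0 < -u * x := mul_pos (by linarith) hx1
      linarith
    have heq : ∀ᵐ x ∂μ, Real.log ((1+u)/S u - u*x)
        = Real.log (u / g u) + Real.log (1 - g u * x) := by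
      filter_upwards [hsupp] with x hx
      have hx1 : 0 < x := lt_of_lt_of_le ha hx.1
      have h1 : (1:ℝ) < 1 - g u * x := by nlinarith
      have hprod : (1+u)/S u - u*x = (u / g u) * (1 - g u * x) := by
        rw [hkey]
        field_simp [ne_of_lt hp]
      rw [hprod, Real.log_mul (ne_of_gt hug) (by linarith)]
    have hIa := aux_integrable12 μ ha hsupp hp
    have hInt : Integrable (fun x => Real.log ((1+u)/S u - u*x)) μ :=
      ((integrable_const (Real.log (u / g u))).add hIa).congr
        (heq.mono fun x hx => hx.symm)
    have hint : ∫ x, Real.log ((1+u)/S u - u*x) ∂μ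
        = Real.log (u / g u) + F (g u) := by
      rw [integral_congr_ae heq, integral_add (integrable_const _) hIa, integral_const,
        probReal_univ]
      simp [hFdef]
    have hlog : Real.log (u / g u) = Real.log (1+u) - Real.log (S u) := by
      rw [← hkey, Real.log_div (ne_of_gt h1u) (ne_of_gt hSpos)]
    have hrep : H u = -u * Real.log (S u) - Real.log (1+u) - F (g u) := by
      rw [hH u, hint, hlog]; ring
    exact ⟨hSpos, hpos, hInt, hrep⟩
  have hderivS : ∀ u ∈ Set.Ioo (-1:ℝ) 0,
      HasDerivAt S (((1 * g u + (1+u) * g' u) * u - (1+u) * g u * 1) / u ^ 2) u := by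
    intro u hu
    have hu0' : u ≠ 0 := ne_of_lt hu.2
    have hnum : HasDerivAt (fun v => (1+v) * g v) (1 * g u + (1+u) * g' u) u :=
      ((hasDerivAt_id u).const_add 1).mul (hd u hu)
    have hdv := hnum.div (hasDerivAt_id u) hu0'
    have hSf : S = fun v => (1+v) * g v / v := funext hS
    rw [hSf]
    exact hdv
  have hderivH : ∀ u ∈ Set.Ioo (-1:ℝ) 0, HasDerivAt H (-Real.log (S u)) u := by
    intro u hu
    obtain ⟨hu1, hu0⟩ := hu
    have hp : g u < 0 := hgneg u ⟨hu1, hu0⟩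
    have hp' : g u ≠ 0 := ne_of_lt hp
    have hu0' : u ≠ 0 := ne_of_lt hu0
    have h1u : 0 < 1 + u := by linarith
    have h1u' : (1:ℝ) + u ≠ 0 := ne_of_gt h1u
    have hSpos := (hfacts u ⟨hu1, hu0⟩).1
    set sd := ((1 * g u + (1+u) * g' u) * u - (1+u) * g u * 1) / u ^ 2 with hsd
    have hSd : HasDerivAt S sd u := hderivS u ⟨hu1, hu0⟩
    have hLd : HasDerivAt (fun v => Real.log (S v)) (sd / S u) u := hSd.log (ne_of_gt hSpos)
    have ht1 : HasDerivAt (fun v => -v * Real.log (S v))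
        (-1 * Real.log (S u) + -u * (sd / S u)) u := by
      have := (hasDerivAt_id u).neg.mul hLd
      exact this
    have ht2 : HasDerivAt (fun v => Real.log (1+v)) (1 / (1+u)) u := by
      have := ((hasDerivAt_id u).const_add 1).log h1u'
      simpa using this
    have hFd : HasDerivAt F (∫ x, -x / (1 - g u * x) ∂μ) (g u) :=
      aux_deriv12 μ ha hab hsupp hp
    have hC : (∫ x, -x / (1 - g u * x) ∂μ) = -u / g u := by
      have hrw : ∀ x : ℝ, -x / (1 - g u * x) = (-1 / g u) * (g u * x / (1 - g u * x)) := by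
        intro x
        rw [mul_div_assoc']
        congr 1
        field_simp
      simp_rw [hrw]
      rw [integral_const_mul, hinv u ⟨hu1, hu0⟩]
      field_simp
    rw [hC] at hFd
    have ht3 : HasDerivAt (fun v => F (g v)) (-u / g u * g' u) u :=
      hFd.comp u (hd u ⟨hu1, hu0⟩)
    have hsum := (ht1.sub ht2).sub ht3
    have hev : H =ᶠ[nhds u] fun v => -v * Real.log (S v) - Real.log (1+v) - F (g v) := by
      filter_upwards [Ioo_mem_nhds hu1 hu0] with v hv
      exact (hfacts v hv).2.2.2
    have hH' : HasDerivAt H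
        (-1 * Real.log (S u) + -u * (sd / S u) - 1 / (1+u) - -u / g u * g' u) u :=
      HasDerivAt.congr_of_eventuallyEq hsum hev
    convert hH' using 1
    have hz0 : -u * (sd / S u) - 1 / (1+u) - -u / g u * g' u = 0 := by
      rw [hsd, hS u]
      field_simp
      ring
    linarith [hz0]
  refine ⟨fun u hu => ⟨(hfacts u hu).1, (hfacts u hu).2.1, (hfacts u hu).2.2.1,
    hderivH u hu⟩, ?_⟩
  intro _ u hu
  obtain ⟨hu1, hu0⟩ := hu
  have hSpos := (hfacts u ⟨hu1, hu0⟩).1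
  have hSd := hderivS u ⟨hu1, hu0⟩
  have hLd : HasDerivAt (fun v => Real.log (S v))
      ((((1 * g u + (1+u) * g' u) * u - (1+u) * g u * 1) / u ^ 2) / S u) u :=
    hSd.log (ne_of_gt hSpos)
  have hdH : deriv H =ᶠ[nhds u] fun v => -Real.log (S v) := by
    filter_upwards [Ioo_mem_nhds hu1 hu0] with v hv
    exact (hderivH v hv).deriv
  have hfinal := HasDerivAt.congr_of_eventuallyEq hLd.neg hdH
  rw [hSd.deriv, neg_div]
  exact hfinal
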